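/- Let e : ℝ → ℝ be continuously differentiable, 1-periodic, and everywhere positive, and let u : ℝ → ℝ be 1-periodic and such that x ↦ u(x)/e(x) is differentiable and x ↦ e(x)·(d/dx)(u/e)(x) is differentiable with (d/dx)[e·(d/dx)(u/e)](x) = e'(x) for all x ∈ ℝ. Then for all x ∈ ℝ, (d/dx)(u/e)(x) = 1 − 1/(e(x)·∫₀¹ (1/e(y)) dy). -/

import Mathlib

/-- The 1D cell problem: if e is C¹, 1-periodic, positive, u is 1-periodic, u/e is
differentiable and (e·(u/e)')' = e', then (u/e)' = 1 − 1/(e·∫₀¹(1/e)). -/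
theorem stmt_8 (e u : ℝ → ℝ)
    (he : ContDiff ℝ 1 e) (heper : ∀ x, e (x + 1) = e x) (hepos : ∀ x, 0 < e x)
    (huper : ∀ x, u (x + 1) = u x)
    (hφ : Differentiable ℝ (fun x => u x / e x))
    (hψ : Differentiable ℝ (fun x => e x * deriv (fun z => u z / e z) x))
    (hode : ∀ x, deriv (fun y => e y * deriv (fun z => u z / e z) y) x = deriv e x) :
    ∀ x, deriv (fun z => u z / e z) x = 1 - 1 / (e x * ∫ y in (0:ℝ)..1, 1 / e y) := by
  set φ : ℝ → ℝ := fun z => u z / e z with hφdef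
  have hene : ∀ x, e x ≠ 0 := fun x => (hepos x).ne'
  have hediff : Differentiable ℝ e := he.differentiable one_ne_zero
  -- g := e * φ' - e has zero derivative, hence is constant
  have hg : Differentiable ℝ (fun x => e x * deriv φ x - e x) := hψ.sub hediff
  have hgd : ∀ x, deriv (fun x => e x * deriv φ x - e x) x = 0 := by
    intro x
    rw [deriv_fun_sub (hψ x) (hediff x), hode x, sub_self]
  set C : ℝ := e 0 * deriv φ 0 - e 0 with hC
  have hconst : ∀ x, e x * deriv φ x - e x = C := fun x =>
    is_const_of_deriv_eq_zero hg hgd x 0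
  have hφ' : ∀ x, deriv φ x = 1 + C / e x := by
    intro x
    have h := hconst x
    field_simp [hene x]
    linarith [h]
  -- the integral I = ∫ 1/e is positive
  have hecont : Continuous e := he.continuous
  have hinvcont : Continuous (fun y => 1 / e y) :=
    continuous_const.div hecont hene
  set I : ℝ := ∫ y in (0:ℝ)..1, 1 / e y with hI
  have hIpos : 0 < I := by
    apply intervalIntegral.intervalIntegral_pos_of_pos_on
      (hinvcont.intervalIntegrable 0 1)
    · intro x _
      exact one_div_pos.mpr (hepos x)
    · norm_num
  -- ∫₀¹ φ' = φ 1 - φ 0 = 0 by periodicity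
  have hint : IntervalIntegrable (deriv φ) MeasureTheory.volume 0 1 := by
    have : deriv φ = fun x => 1 + C / e x := funext hφ'
    rw [this]
    exact (continuous_const.add (continuous_const.div hecont hene)).intervalIntegrable 0 1
  have hFTC : (∫ y in (0:ℝ)..1, deriv φ y) = φ 1 - φ 0 :=
    intervalIntegral.integral_deriv_eq_sub (fun x _ => hφ x) hint
  have hper0 : φ 1 = φ 0 := by
    simp only [hφdef]
    rw [show (1:ℝ) = 0 + 1 by norm_num, huper 0, heper 0]
  have hzero : (∫ y in (0:ℝ)..1, deriv φ y) = 0 := by rw [hFTC, hper0, sub_self]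
  have hval : (∫ y in (0:ℝ)..1, deriv φ y) = 1 + C * I := by
    have : (∫ y in (0:ℝ)..1, deriv φ y) = ∫ y in (0:ℝ)..1, (1 + C * (1 / e y)) := by
      apply intervalIntegral.integral_congr
      intro y _
      rw [hφ' y]
      ring
    rw [this, intervalIntegral.integral_add (f := fun _ => (1:ℝ)) (g := fun y => C * (1 / e y)) (intervalIntegrable_const)
      ((continuous_const.mul hinvcont).intervalIntegrable 0 1),
      intervalIntegral.integral_const_mul, intervalIntegral.integral_const]
    simp [hI]
  have hCval : C = -1 / I := by
    have : 1 + C * I = 0 := by rw [← hval, hzero]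
    field_simp
    linarith
  intro x
  rw [hφ' x, hCval]
  field_simp
  ring
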